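/- Let α > 0, n ≥ 1 an integer, and ν a probability measure on (0,∞). Let X, D, θ, Q be random variables on a probability space (Ω, ℙ) such that: X has distribution ν^{△_α n}; D has distribution ν; X and D are independent; θ has the Pareto distribution π_{2α} and is independent of the triple (X, D, Q); Q takes values in {0,1}; and ℙ({Q = 1} ∩ {(X,D) ∈ B}) = ∫_B z(x,y)^α d(law(X,D))(x,y) for every Borel set B ⊆ (0,∞)², where z(x,y) = min(x,y)/max(x,y). Then the random variable max(X, D) · θ^Q has distribution ν^{△_α (n+1)}. -/

import Mathlib

open MeasureTheory Set

/-- The Pareto probability measure `π_{2α}` on `ℝ`, with density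
`2α x^(-(2α+1)) 1_{(1,∞)}(x)` with respect to Lebesgue measure. -/
noncomputable def pareto (α : ℝ) : Measure ℝ :=
  volume.withDensity
    (fun x => ENNReal.ofReal (if 1 < x then 2 * α * x ^ (-(2 * α) - 1) else 0))

/-- The Kendall probability kernel `ρ_{a,b} = (1 - (a/b)^α) δ_b + (a/b)^α T_b π_{2α}`
for `0 ≤ a ≤ b` (with `ρ_{0,0} = δ_0`). -/
noncomputable def kendallKernelLe (α a b : ℝ) : Measure ℝ :=
  if b = 0 then Measure.dirac 0
  else ENNReal.ofReal (1 - (a / b) ^ α) • Measure.dirac b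
      + ENNReal.ofReal ((a / b) ^ α) • Measure.map (fun x => b * x) (pareto α)

/-- The Kendall kernel `ρ_{x,y}`, extended symmetrically. -/
noncomputable def kendallKernel (α x y : ℝ) : Measure ℝ :=
  kendallKernelLe α (min x y) (max x y)

/-- The Kendall convolution `λ △_α ν`, defined by
`(λ △_α ν)(A) = ∫∫ ρ_{x,y}(A) λ(dx) ν(dy)`. -/
noncomputable def kendallConv (α : ℝ) (lam ν : Measure ℝ) : Measure ℝ :=
  lam.bind (fun x => ν.bind (fun y => kendallKernel α x y))

/-- The `n`-fold Kendall convolution power `ν^{△_α n}`, with `ν^{△_α 0} = δ_0`. -/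
noncomputable def kendallPow (α : ℝ) (ν : Measure ℝ) : ℕ → Measure ℝ
  | 0 => Measure.dirac 0
  | n + 1 => kendallConv α (kendallPow α ν n) ν

open scoped ENNReal

lemma pareto_eq (α : ℝ) : pareto α = ProbabilityTheory.paretoMeasure 1 (2 * α) := by
  unfold pareto ProbabilityTheory.paretoMeasure
  refine withDensity_congr_ae ?_
  have h : {x : ℝ | ¬ (ENNReal.ofReal (if 1 < x then 2*α*x^(-(2*α)-1) else 0)
      = ProbabilityTheory.paretoPDF 1 (2*α) x)} ⊆ {1} := by
    intro x hx
    simp only [mem_setOf_eq, ProbabilityTheory.paretoPDF_eq] at hx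
    by_contra hne
    apply hx
    rcases lt_trichotomy x 1 with h1 | h1 | h1
    · rw [if_neg (by linarith), if_neg (by linarith)]
    · exact absurd h1 (by simpa using hne)
    · rw [if_pos h1, if_pos h1.le, Real.one_rpow, mul_one]
      norm_num [show -(2*α+1) = -(2*α)-1 by ring]
  rw [Filter.EventuallyEq, ae_iff]
  exact measure_mono_null h Real.volume_singleton

lemma pareto_isProb {α : ℝ} (hα : 0 < α) : IsProbabilityMeasure (pareto α) := by
  rw [pareto_eq]
  exact ProbabilityTheory.isProbabilityMeasure_paretoMeasure one_pos (by linarith)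

lemma pareto_Iic_one (α : ℝ) : pareto α (Iic 1) = 0 := by
  rw [pareto, withDensity_apply _ measurableSet_Iic]
  have : ∫⁻ x in Iic (1:ℝ),
      ENNReal.ofReal (if 1 < x then 2 * α * x ^ (-(2 * α) - 1) else 0)
      = ∫⁻ _ in Iic (1:ℝ), 0 := by
    refine setLIntegral_congr_fun measurableSet_Iic (fun x hx => ?_)
    rw [if_neg (not_lt.2 (mem_Iic.1 hx))]
    simp
  simpa using this

lemma map_mul_pareto_apply (α b : ℝ) {s : Set ℝ} (hs : MeasurableSet s) :
    Measure.map (fun t => b * t) (pareto α) s = ∫⁻ t, s.indicator 1 (b * t) ∂(pareto α) := by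
  rw [Measure.map_apply (measurable_const_mul b) hs,
    ← lintegral_indicator_one ((measurable_const_mul b) hs)]
  refine lintegral_congr fun t => ?_
  by_cases h : b * t ∈ s <;> simp [Set.indicator_apply, mem_preimage, h]

lemma kendallKernel_apply {α x y : ℝ} (hb : 0 < max x y) {s : Set ℝ} (hs : MeasurableSet s) :
    kendallKernel α x y s
      = ENNReal.ofReal (1 - (min x y / max x y) ^ α) * s.indicator 1 (max x y)
        + ENNReal.ofReal ((min x y / max x y) ^ α)
          * Measure.map (fun t => max x y * t) (pareto α) s := by
  rw [kendallKernel, kendallKernelLe, if_neg hb.ne']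
  simp [Measure.dirac_apply' _ hs]

lemma kendallKernel_univ {α x y : ℝ} (hα : 0 < α) (hx : 0 ≤ x) (hy : 0 ≤ y)
    (hb : 0 < max x y) : kendallKernel α x y univ = 1 := by
  haveI := pareto_isProb hα
  have hmin : 0 ≤ min x y := le_min hx hy
  have hle : min x y / max x y ≤ 1 := div_le_one_of_le₀ (min_le_max) hb.le
  have h0 : 0 ≤ (min x y / max x y) ^ α := Real.rpow_nonneg (div_nonneg hmin hb.le) α
  have h1 : (min x y / max x y) ^ α ≤ 1 :=
    Real.rpow_le_one (div_nonneg hmin hb.le) hle hα.le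
  rw [kendallKernel_apply hb MeasurableSet.univ]
  rw [Measure.map_apply (measurable_const_mul _) MeasurableSet.univ]
  simp only [Set.indicator_univ, Pi.one_apply, preimage_univ, measure_univ, mul_one]
  rw [← ENNReal.ofReal_add (by linarith) h0, sub_add_cancel, ENNReal.ofReal_one]

lemma kendallKernel_Iic {α x y : ℝ} (hα : 0 < α) (hb : 0 < max x y) :
    kendallKernel α x y (Iic 0) = 0 := by
  rw [kendallKernel_apply hb measurableSet_Iic]
  have h1 : (Iic (0:ℝ)).indicator (1 : ℝ → ℝ≥0∞) (max x y) = 0 := by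
    simp [Set.indicator_apply, not_le.2 hb]
  have h2 : Measure.map (fun t => max x y * t) (pareto α) (Iic 0) = 0 := by
    rw [Measure.map_apply (measurable_const_mul _) measurableSet_Iic]
    refine measure_mono_null ?_ (pareto_Iic_one α)
    intro t ht
    simp only [mem_preimage, mem_Iic] at ht ⊢
    nlinarith [mul_nonneg hb.le (le_of_lt (lt_of_le_of_lt (le_of_eq rfl) zero_lt_one))]
  rw [h1, h2]; simp

lemma kendallKernel_zero_left {α y : ℝ} (hα : 0 < α) (hy : 0 < y) :
    kendallKernel α 0 y = Measure.dirac y := by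
  rw [kendallKernel, min_eq_left hy.le, max_eq_right hy.le, kendallKernelLe, if_neg hy.ne']
  rw [zero_div, Real.zero_rpow hα.ne']
  simp

lemma measurable_scaledPareto {α : ℝ} (hα : 0 < α) {s : Set ℝ} (hs : MeasurableSet s) :
    Measurable fun b : ℝ => Measure.map (fun t => b * t) (pareto α) s := by
  haveI := pareto_isProb hα
  simp_rw [fun b => map_mul_pareto_apply α b hs]
  exact Measurable.lintegral_prod_right'
    (f := fun q : ℝ × ℝ => s.indicator 1 (q.1 * q.2))
    ((measurable_one.indicator hs).comp (measurable_fst.mul measurable_snd))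

lemma measurable_kendallKernel_apply {α : ℝ} (hα : 0 < α) {s : Set ℝ} (hs : MeasurableSet s) :
    Measurable fun p : ℝ × ℝ => kendallKernel α p.1 p.2 s := by
  have hmax : Measurable fun p : ℝ × ℝ => max p.1 p.2 := measurable_fst.max measurable_snd
  have hmin : Measurable fun p : ℝ × ℝ => min p.1 p.2 := measurable_fst.min measurable_snd
  have hw : Measurable fun p : ℝ × ℝ => ENNReal.ofReal ((min p.1 p.2 / max p.1 p.2) ^ α) :=
    ((hmin.div hmax).pow_const α).ennreal_ofReal
  have hw' : Measurable fun p : ℝ × ℝ =>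
      ENNReal.ofReal (1 - (min p.1 p.2 / max p.1 p.2) ^ α) :=
    (measurable_const.sub ((hmin.div hmax).pow_const α)).ennreal_ofReal
  have hd : Measurable fun p : ℝ × ℝ => (Measure.dirac (max p.1 p.2) : Measure ℝ) s := by
    simp_rw [Measure.dirac_apply' _ hs]
    exact (measurable_one.indicator hs).comp hmax
  have hm : Measurable fun p : ℝ × ℝ =>
      Measure.map (fun t => max p.1 p.2 * t) (pareto α) s :=
    (measurable_scaledPareto hα hs).comp hmax
  have heq : (fun p : ℝ × ℝ => kendallKernel α p.1 p.2 s)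
      = fun p => if max p.1 p.2 = 0 then (Measure.dirac (0:ℝ)) s
        else ENNReal.ofReal (1 - (min p.1 p.2 / max p.1 p.2) ^ α)
              * (Measure.dirac (max p.1 p.2) : Measure ℝ) s
            + ENNReal.ofReal ((min p.1 p.2 / max p.1 p.2) ^ α)
              * Measure.map (fun t => max p.1 p.2 * t) (pareto α) s := by
    funext p
    rw [kendallKernel, kendallKernelLe]
    split_ifs with h <;> simp
  rw [heq]
  exact Measurable.ite (hmax (measurableSet_singleton 0)) measurable_const
    ((hw'.mul hd).add (hw.mul hm))

lemma measurable_kendallKernel {α : ℝ} (hα : 0 < α) :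
    Measurable fun p : ℝ × ℝ => kendallKernel α p.1 p.2 :=
  Measure.measurable_of_measurable_coe _ fun _ hs => measurable_kendallKernel_apply hα hs

lemma measurable_kendallKernel_left {α : ℝ} (hα : 0 < α) (x : ℝ) :
    Measurable fun y : ℝ => kendallKernel α x y :=
  (measurable_kendallKernel hα).comp measurable_prodMk_left

lemma measurable_bind_kendall {α : ℝ} (hα : 0 < α) (ν : Measure ℝ) [SFinite ν] :
    Measurable fun x : ℝ => ν.bind (fun y => kendallKernel α x y) := by
  apply Measure.measurable_of_measurable_coe
  intro s hs
  have h : ∀ x, ν.bind (fun y => kendallKernel α x y) s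
      = ∫⁻ y, kendallKernel α x y s ∂ν :=
    fun x => Measure.bind_apply hs (measurable_kendallKernel_left hα x).aemeasurable
  simp_rw [h]
  exact (measurable_kendallKernel_apply hα hs).lintegral_prod_right'

lemma kendallConv_apply {α : ℝ} (hα : 0 < α) (μ ν : Measure ℝ) [SFinite μ] [SFinite ν]
    {s : Set ℝ} (hs : MeasurableSet s) :
    kendallConv α μ ν s = ∫⁻ p, kendallKernel α p.1 p.2 s ∂(μ.prod ν) := by
  rw [kendallConv, Measure.bind_apply hs (measurable_bind_kendall hα ν).aemeasurable,
    lintegral_prod _ (measurable_kendallKernel_apply hα hs).aemeasurable]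
  exact lintegral_congr fun x =>
    Measure.bind_apply hs (measurable_kendallKernel_left hα x).aemeasurable

lemma prod_ae_pos (μ ν : Measure ℝ) [IsProbabilityMeasure μ] [IsProbabilityMeasure ν]
    (hμ : μ (Iio 0) = 0) (hν : ν (Iic 0) = 0) :
    ∀ᵐ p : ℝ × ℝ ∂(μ.prod ν), 0 ≤ p.1 ∧ 0 < p.2 := by
  rw [ae_iff]
  refine measure_mono_null (t := (Iio 0 ×ˢ (univ : Set ℝ)) ∪ ((univ : Set ℝ) ×ˢ Iic 0))
    (fun p hp => ?_) ?_
  · simp only [mem_setOf_eq, not_and_or, not_le, not_lt] at hp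
    rcases hp with h | h
    · exact Or.inl ⟨h, mem_univ _⟩
    · exact Or.inr ⟨mem_univ _, h⟩
  · refine measure_union_null ?_ ?_ <;> rw [Measure.prod_prod] <;> simp [hμ, hν]

lemma kendallConv_isProb {α : ℝ} (hα : 0 < α) (μ ν : Measure ℝ)
    [IsProbabilityMeasure μ] [IsProbabilityMeasure ν]
    (hμ : μ (Iio 0) = 0) (hν : ν (Iic 0) = 0) :
    IsProbabilityMeasure (kendallConv α μ ν) := by
  constructor
  rw [kendallConv_apply hα μ ν MeasurableSet.univ]
  have h : ∀ᵐ p : ℝ × ℝ ∂(μ.prod ν), kendallKernel α p.1 p.2 univ = 1 :=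
    (prod_ae_pos μ ν hμ hν).mono fun p hp =>
      kendallKernel_univ hα hp.1 hp.2.le (lt_of_lt_of_le hp.2 (le_max_right _ _))
  rw [lintegral_congr_ae h, lintegral_one, measure_univ]

lemma kendallConv_Iic {α : ℝ} (hα : 0 < α) (μ ν : Measure ℝ)
    [IsProbabilityMeasure μ] [IsProbabilityMeasure ν]
    (hμ : μ (Iio 0) = 0) (hν : ν (Iic 0) = 0) :
    kendallConv α μ ν (Iic 0) = 0 := by
  rw [kendallConv_apply hα μ ν measurableSet_Iic]
  have h : ∀ᵐ p : ℝ × ℝ ∂(μ.prod ν), kendallKernel α p.1 p.2 (Iic 0) = 0 :=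
    (prod_ae_pos μ ν hμ hν).mono fun p hp =>
      kendallKernel_Iic hα (lt_of_lt_of_le hp.2 (le_max_right _ _))
  rw [lintegral_congr_ae h, lintegral_zero]

lemma kendallPow_isProb {α : ℝ} (hα : 0 < α) (ν : Measure ℝ) [IsProbabilityMeasure ν]
    (hν : ν (Iic 0) = 0) :
    ∀ n, IsProbabilityMeasure (kendallPow α ν n) ∧ kendallPow α ν n (Iio 0) = 0 := by
  intro n
  induction n with
  | zero =>
    refine ⟨by rw [kendallPow]; infer_instance, ?_⟩
    rw [kendallPow, Measure.dirac_apply' _ measurableSet_Iio]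
    simp
  | succ m ih =>
    haveI := ih.1
    refine ⟨kendallConv_isProb hα _ ν ih.2 hν, ?_⟩
    exact measure_mono_null Iio_subset_Iic_self (kendallConv_Iic hα _ ν ih.2 hν)

lemma kendallPow_Iic {α : ℝ} (hα : 0 < α) (ν : Measure ℝ) [IsProbabilityMeasure ν]
    (hν : ν (Iic 0) = 0) {n : ℕ} (hn : 1 ≤ n) : kendallPow α ν n (Iic 0) = 0 := by
  obtain ⟨m, rfl⟩ : ∃ m, n = m + 1 := ⟨n - 1, by omega⟩
  haveI := (kendallPow_isProb hα ν hν m).1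
  exact kendallConv_Iic hα _ ν (kendallPow_isProb hα ν hν m).2 hν

/-- The Kendall–Williamson transform `Φ_ν(t) = ∫ (1 - (t s)^α)_+ ν(ds)`. -/
noncomputable def williamson (α : ℝ) (ν : Measure ℝ) (t : ℝ) : ℝ :=
  ∫ s, max (1 - (t * s) ^ α) 0 ∂ν

/-- One-step representation of the Kendall random walk with unit step distribution `ν` on
`(0,∞)`: if `X ∼ ν^{△_α n}` and `D ∼ ν` are independent, `θ ∼ π_{2α}` is independent of
`(X, D, Q)`, `Q` takes values in `{0,1}` and
`ℙ({Q = 1} ∩ {(X,D) ∈ B}) = ∫_B z(x,y)^α d(law (X,D))` for all Borel `B ⊆ (0,∞)²`, where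
`z(x,y) = min(x,y)/max(x,y)`, then `max(X,D) · θ^Q` has distribution `ν^{△_α (n+1)}`. -/
theorem kendall_walk_step
    {Ω : Type*} [MeasurableSpace Ω] (ℙ : Measure Ω) [IsProbabilityMeasure ℙ]
    (α : ℝ) (hα : 0 < α) (n : ℕ) (hn : 1 ≤ n)
    (ν : Measure ℝ) [IsProbabilityMeasure ν] (hν : ν (Set.Iic 0) = 0)
    (X D θ Q : Ω → ℝ) (hX : Measurable X) (hD : Measurable D) (hθ : Measurable θ)
    (hQ : Measurable Q)
    (hXlaw : Measure.map X ℙ = kendallPow α ν n)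
    (hDlaw : Measure.map D ℙ = ν)
    (hXD : ProbabilityTheory.IndepFun X D ℙ)
    (hθlaw : Measure.map θ ℙ = pareto α)
    (hindep : ProbabilityTheory.IndepFun θ (fun ω => (X ω, D ω, Q ω)) ℙ)
    (hQ01 : ∀ ω, Q ω = 0 ∨ Q ω = 1)
    (hQ1 : ∀ B : Set (ℝ × ℝ), MeasurableSet B → B ⊆ Set.Ioi 0 ×ˢ Set.Ioi 0 →
      ℙ ({ω | Q ω = 1} ∩ (fun ω => (X ω, D ω)) ⁻¹' B)
        = ∫⁻ p in B, ENNReal.ofReal ((min p.1 p.2 / max p.1 p.2) ^ α)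
            ∂(Measure.map (fun ω => (X ω, D ω)) ℙ)) :
    Measure.map (fun ω => max (X ω) (D ω) * θ ω ^ Q ω) ℙ = kendallPow α ν (n + 1) := by
  classical
  haveI hπ : IsProbabilityMeasure (pareto α) := pareto_isProb hα
  obtain ⟨hPn, hPnIio⟩ := kendallPow_isProb hα ν hν n
  haveI := hPn
  have hμIic : kendallPow α ν n (Iic 0) = 0 := kendallPow_Iic hα ν hν hn
  have hXDm : Measurable fun ω => (X ω, D ω) := hX.prodMk hD
  set μ2 : Measure (ℝ × ℝ) := Measure.map (fun ω => (X ω, D ω)) ℙ with hμ2def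
  have hμ2 : μ2 = (kendallPow α ν n).prod ν := by
    rw [hμ2def, ← hXlaw, ← hDlaw]
    exact (ProbabilityTheory.indepFun_iff_map_prod_eq_prod_map_map
      hX.aemeasurable hD.aemeasurable).1 hXD
  haveI : IsProbabilityMeasure μ2 := by rw [hμ2]; infer_instance
  have hposae : ∀ᵐ p : ℝ × ℝ ∂μ2, 0 < p.1 ∧ 0 < p.2 := by
    rw [hμ2, ae_iff]
    refine measure_mono_null (t := (Iic 0 ×ˢ (univ : Set ℝ)) ∪ ((univ : Set ℝ) ×ˢ Iic 0))
      (fun p hp => ?_) ?_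
    · simp only [mem_setOf_eq, not_and_or, not_lt] at hp
      rcases hp with h | h
      · exact Or.inl ⟨h, mem_univ _⟩
      · exact Or.inr ⟨mem_univ _, h⟩
    · refine measure_union_null ?_ ?_ <;> rw [Measure.prod_prod] <;> simp [hμIic, hν]
  have hmeasposset : MeasurableSet {p : ℝ × ℝ | 0 < p.1 ∧ 0 < p.2} :=
    (measurable_fst measurableSet_Ioi).inter (measurable_snd measurableSet_Ioi)
  have hWpos : ∀ᵐ ω ∂ℙ, 0 < X ω ∧ 0 < D ω := by
    have h := hposae
    rw [hμ2def, ae_map_iff hXDm.aemeasurable hmeasposset] at h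
    exact h
  -- extension of hQ1 to all measurable sets
  have key : ∀ C : Set (ℝ × ℝ), MeasurableSet C →
      ℙ ({ω | Q ω = 1} ∩ (fun ω => (X ω, D ω)) ⁻¹' C)
        = ∫⁻ p in C, ENNReal.ofReal ((min p.1 p.2 / max p.1 p.2) ^ α) ∂μ2 := by
    intro C hC
    have h1 : (({ω | Q ω = 1} ∩ (fun ω => (X ω, D ω)) ⁻¹' C : Set Ω))
        =ᵐ[ℙ] (({ω | Q ω = 1} ∩ (fun ω => (X ω, D ω)) ⁻¹'
            (C ∩ {p : ℝ × ℝ | 0 < p.1 ∧ 0 < p.2}) : Set Ω)) := by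
      rw [Filter.eventuallyEq_set]
      filter_upwards [hWpos] with ω hω
      simp only [mem_inter_iff, mem_preimage, mem_setOf_eq]
      tauto
    rw [measure_congr h1, hQ1 _ (hC.inter hmeasposset)
      (fun p hp => mem_prod.2 ⟨hp.2.1, hp.2.2⟩)]
    refine setLIntegral_congr ?_
    rw [Filter.eventuallyEq_set]
    filter_upwards [hposae] with p hp
    simp only [mem_inter_iff, mem_setOf_eq]
    tauto
  have hmap : ∀ C : Set (ℝ × ℝ), MeasurableSet C →
      ℙ ((fun ω => (X ω, D ω)) ⁻¹' C) = μ2 C :=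
    fun C hC => (Measure.map_apply hXDm hC).symm
  -- measurability helpers
  have hmaxm : Measurable fun p : ℝ × ℝ => max p.1 p.2 := measurable_fst.max measurable_snd
  have hw : Measurable fun p : ℝ × ℝ =>
      ENNReal.ofReal ((min p.1 p.2 / max p.1 p.2) ^ α) :=
    (((measurable_fst.min measurable_snd).div hmaxm).pow_const α).ennreal_ofReal
  have hw' : Measurable fun p : ℝ × ℝ =>
      ENNReal.ofReal (1 - (min p.1 p.2 / max p.1 p.2) ^ α) :=
    (measurable_const.sub
      (((measurable_fst.min measurable_snd).div hmaxm).pow_const α)).ennreal_ofReal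
  -- start
  refine Measure.ext fun s hs => ?_
  have hg : Measurable fun ω => max (X ω) (D ω) * θ ω ^ Q ω := (hX.max hD).mul (hθ.pow hQ)
  rw [Measure.map_apply hg hs]
  have hRHS : kendallPow α ν (n + 1) s = ∫⁻ p, kendallKernel α p.1 p.2 s ∂μ2 := by
    rw [show kendallPow α ν (n + 1) = kendallConv α (kendallPow α ν n) ν from rfl,
      kendallConv_apply hα _ _ hs, ← hμ2]
  rw [hRHS]
  have hE1 : MeasurableSet {ω | Q ω = 1} := hQ (measurableSet_singleton 1)
  have hsplit : (fun ω => max (X ω) (D ω) * θ ω ^ Q ω) ⁻¹' s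
      = ({ω | Q ω = 1}ᶜ ∩ (fun ω => max (X ω) (D ω)) ⁻¹' s)
        ∪ ({ω | Q ω = 1} ∩ (fun ω => max (X ω) (D ω) * θ ω) ⁻¹' s) := by
    ext ω
    rcases hQ01 ω with h | h
    · simp [mem_preimage, h, Real.rpow_zero]
    · simp [mem_preimage, h, Real.rpow_one]
  rw [hsplit, measure_union
    (disjoint_compl_left.mono inter_subset_left inter_subset_left)
    (hE1.inter ((show Measurable fun ω => max (X ω) (D ω) * θ ω from (hX.max hD).mul hθ) hs))]
  -- Claim B : the Q = 0 part
  set B : Set (ℝ × ℝ) := (fun p : ℝ × ℝ => max p.1 p.2) ⁻¹' s with hBdef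
  have hBm : MeasurableSet B := hmaxm hs
  have hkeyB := key B hBm
  have hBsplit : μ2 B
      = ℙ ({ω | Q ω = 1}ᶜ ∩ (fun ω => (X ω, D ω)) ⁻¹' B)
        + ∫⁻ p in B, ENNReal.ofReal ((min p.1 p.2 / max p.1 p.2) ^ α) ∂μ2 := by
    rw [← hkeyB, ← hmap B hBm,
      ← measure_union (disjoint_compl_left.mono inter_subset_left inter_subset_left)
        (hE1.inter (hXDm hBm)),
      ← union_inter_distrib_right, compl_union_self, univ_inter]
  have hsum : ∫⁻ p in B, ENNReal.ofReal (1 - (min p.1 p.2 / max p.1 p.2) ^ α) ∂μ2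
        + ∫⁻ p in B, ENNReal.ofReal ((min p.1 p.2 / max p.1 p.2) ^ α) ∂μ2 = μ2 B := by
    rw [← lintegral_add_left hw']
    have hae : ∀ᵐ p ∂μ2.restrict B,
        ENNReal.ofReal (1 - (min p.1 p.2 / max p.1 p.2) ^ α)
          + ENNReal.ofReal ((min p.1 p.2 / max p.1 p.2) ^ α) = 1 := by
      refine ae_restrict_of_ae (hposae.mono fun p hp => ?_)
      have hmin0 : 0 ≤ min p.1 p.2 := le_min hp.1.le hp.2.le
      have hb : 0 < max p.1 p.2 := lt_of_lt_of_le hp.1 (le_max_left _ _)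
      have h0 : 0 ≤ (min p.1 p.2 / max p.1 p.2) ^ α :=
        Real.rpow_nonneg (div_nonneg hmin0 hb.le) α
      have h1 : (min p.1 p.2 / max p.1 p.2) ^ α ≤ 1 :=
        Real.rpow_le_one (div_nonneg hmin0 hb.le) (div_le_one_of_le₀ min_le_max hb.le) hα.le
      rw [← ENNReal.ofReal_add (by linarith) h0, sub_add_cancel, ENNReal.ofReal_one]
    rw [lintegral_congr_ae hae, setLIntegral_one]
  have hfinw : ∫⁻ p in B, ENNReal.ofReal ((min p.1 p.2 / max p.1 p.2) ^ α) ∂μ2 ≠ ⊤ := by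
    rw [← hkeyB]
    exact (measure_lt_top ℙ _).ne
  have hclaimB : ℙ ({ω | Q ω = 1}ᶜ ∩ (fun ω => (X ω, D ω)) ⁻¹' B)
      = ∫⁻ p in B, ENNReal.ofReal (1 - (min p.1 p.2 / max p.1 p.2) ^ α) ∂μ2 := by
    have h : ∫⁻ p in B, ENNReal.ofReal ((min p.1 p.2 / max p.1 p.2) ^ α) ∂μ2
          + ℙ ({ω | Q ω = 1}ᶜ ∩ (fun ω => (X ω, D ω)) ⁻¹' B)
        = ∫⁻ p in B, ENNReal.ofReal ((min p.1 p.2 / max p.1 p.2) ^ α) ∂μ2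
          + ∫⁻ p in B, ENNReal.ofReal (1 - (min p.1 p.2 / max p.1 p.2) ^ α) ∂μ2 := by
      rw [add_comm (∫⁻ p in B, ENNReal.ofReal ((min p.1 p.2 / max p.1 p.2) ^ α) ∂μ2)
        (∫⁻ p in B, ENNReal.ofReal (1 - (min p.1 p.2 / max p.1 p.2) ^ α) ∂μ2), hsum,
        add_comm]
      exact hBsplit.symm
    exact (ENNReal.add_right_inj hfinw).1 h
  -- Claim A : the Q = 1 part
  have hWm : Measurable fun ω => (X ω, D ω, Q ω) := hX.prodMk (hD.prodMk hQ)
  haveI : IsProbabilityMeasure (Measure.map (fun ω => (X ω, D ω, Q ω)) ℙ) :=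
    Measure.isProbabilityMeasure_map hWm.aemeasurable
  have hjoint : Measure.map (fun ω => (θ ω, (X ω, D ω, Q ω))) ℙ
      = (pareto α).prod (Measure.map (fun ω => (X ω, D ω, Q ω)) ℙ) := by
    have h := (ProbabilityTheory.indepFun_iff_map_prod_eq_prod_map_map
      hθ.aemeasurable hWm.aemeasurable).1 hindep
    rwa [hθlaw] at h
  have hCm : MeasurableSet {q : ℝ × ℝ × ℝ × ℝ | q.2.2.2 = 1 ∧ max q.2.1 q.2.2.1 * q.1 ∈ s} :=
    ((measurable_snd.snd.snd) (measurableSet_singleton 1)).inter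
      (((measurable_snd.fst.max measurable_snd.snd.fst).mul measurable_fst) hs)
  have hpreC : ({ω | Q ω = 1} ∩ (fun ω => max (X ω) (D ω) * θ ω) ⁻¹' s)
      = (fun ω => (θ ω, (X ω, D ω, Q ω))) ⁻¹'
          {q : ℝ × ℝ × ℝ × ℝ | q.2.2.2 = 1 ∧ max q.2.1 q.2.2.1 * q.1 ∈ s} := by
    ext ω
    simp only [mem_inter_iff, mem_preimage, mem_setOf_eq]
  have hClaimA : ℙ ({ω | Q ω = 1} ∩ (fun ω => max (X ω) (D ω) * θ ω) ⁻¹' s)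
      = ∫⁻ p, ENNReal.ofReal ((min p.1 p.2 / max p.1 p.2) ^ α)
          * Measure.map (fun t => max p.1 p.2 * t) (pareto α) s ∂μ2 := by
    rw [hpreC, ← Measure.map_apply (hθ.prodMk hWm) hCm, hjoint, Measure.prod_apply hCm]
    have hBt : ∀ t : ℝ, (Measure.map (fun ω => (X ω, D ω, Q ω)) ℙ)
        (Prod.mk t ⁻¹' {q : ℝ × ℝ × ℝ × ℝ | q.2.2.2 = 1 ∧ max q.2.1 q.2.2.1 * q.1 ∈ s})
        = ∫⁻ p, ENNReal.ofReal ((min p.1 p.2 / max p.1 p.2) ^ α)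
            * s.indicator 1 (max p.1 p.2 * t) ∂μ2 := by
      intro t
      have hBtm : MeasurableSet {p : ℝ × ℝ | max p.1 p.2 * t ∈ s} := (hmaxm.mul_const t) hs
      have hmeas2 : MeasurableSet {w : ℝ × ℝ × ℝ | w.2.2 = 1 ∧ max w.1 w.2.1 * t ∈ s} :=
        ((measurable_snd.snd) (measurableSet_singleton 1)).inter
          (((measurable_fst.max measurable_snd.fst).mul_const t) hs)
      have h1 : (Prod.mk t ⁻¹'
            {q : ℝ × ℝ × ℝ × ℝ | q.2.2.2 = 1 ∧ max q.2.1 q.2.2.1 * q.1 ∈ s})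
          = {w : ℝ × ℝ × ℝ | w.2.2 = 1 ∧ max w.1 w.2.1 * t ∈ s} := rfl
      rw [h1, Measure.map_apply hWm hmeas2]
      have h2 : ((fun ω => (X ω, D ω, Q ω)) ⁻¹'
            {w : ℝ × ℝ × ℝ | w.2.2 = 1 ∧ max w.1 w.2.1 * t ∈ s})
          = ({ω | Q ω = 1} ∩ (fun ω => (X ω, D ω)) ⁻¹'
              {p : ℝ × ℝ | max p.1 p.2 * t ∈ s}) := rfl
      rw [h2, key _ hBtm, ← lintegral_indicator hBtm]
      refine lintegral_congr fun p => ?_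
      by_cases h : max p.1 p.2 * t ∈ s <;> simp [Set.indicator_apply, h]
    rw [lintegral_congr fun t => hBt t]
    rw [lintegral_lintegral_swap (((hw.comp measurable_snd).mul
      ((measurable_one.indicator hs).comp
        ((measurable_snd.fst.max measurable_snd.snd).mul measurable_fst))).aemeasurable)]
    refine lintegral_congr fun p => ?_
    rw [lintegral_const_mul (f := fun t : ℝ => s.indicator 1 (max p.1 p.2 * t)) _
      ((measurable_one.indicator hs).comp (measurable_const_mul _)),
      map_mul_pareto_apply α _ hs]
  have hpreB : (fun ω => max (X ω) (D ω)) ⁻¹' s = (fun ω => (X ω, D ω)) ⁻¹' B := rfl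
  rw [hpreB, hclaimB, hClaimA]
  have hBind : ∫⁻ p in B, ENNReal.ofReal (1 - (min p.1 p.2 / max p.1 p.2) ^ α) ∂μ2
      = ∫⁻ p, ENNReal.ofReal (1 - (min p.1 p.2 / max p.1 p.2) ^ α)
          * s.indicator 1 (max p.1 p.2) ∂μ2 := by
    rw [← lintegral_indicator hBm]
    refine lintegral_congr fun p => ?_
    by_cases h : max p.1 p.2 ∈ s <;>
      simp [hBdef, Set.indicator_apply, h, mem_preimage]
  rw [hBind, ← lintegral_add_left (f := fun p : ℝ × ℝ =>
    ENNReal.ofReal (1 - (min p.1 p.2 / max p.1 p.2) ^ α) * s.indicator 1 (max p.1 p.2))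
    (hw'.mul ((measurable_one.indicator hs).comp hmaxm))]
  refine lintegral_congr_ae (hposae.mono fun p hp => ?_)
  simp only [kendallKernel_apply (lt_of_lt_of_le hp.1 (le_max_left p.1 p.2)) hs]
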